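/- arXiv:1601.06119 — 2 statements merged into one kernel-verified Lean document; each statement's English description precedes it below -/
import Mathlib

section
/- Let h : BitVec b → BitVec b be injective, k̃ : BitVec b, x a coordinate with |x| < L, x' a padded coordinate of x, and y = hc(k̃, x') the return address generated from x. Then for all coordinates c1, c2 with cpl(x', c_i) ≤ |x| and c_i ≠ x (i = 1, 2): δ_CPL(x, c1) < δ_CPL(x, c2) if and only if δ_CPL(y, hc(k̃, c1)) < δ_CPL(y, hc(k̃, c2)), and δ_CPL(x, c1) = δ_CPL(x, c2) if and only if δ_CPL(y, hc(k̃, c1)) = δ_CPL(y, hc(k̃, c2)); i.e., the return address is route preserving with respect to the common-prefix-length based distance δ_CPL. -/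
/-- The common prefix length of two lists. -/
def cpl {α : Type*} [DecidableEq α] : List α → List α → ℕ
  | a :: as, b :: bs => if a = b then cpl as bs + 1 else 0
  | _, _ => 0

/-- The common-prefix-length based distance. -/
def deltaCPL {α : Type*} [DecidableEq α] (L : ℕ) (x y : List α) : ℚ :=
  if x = y then 0
  else (L : ℚ) - cpl x y - 1 / ((x.length : ℚ) + y.length + 1)

/-- The hash cascade. -/
def hc {b : ℕ} (h : BitVec b → BitVec b) : BitVec b → List (BitVec b) → List (BitVec b)
  | _, [] => []
  | k, a :: as => h (k ^^^ a) :: hc h (h (k ^^^ a)) as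

lemma hc_length {b : ℕ} (h : BitVec b → BitVec b) (k : BitVec b) (l : List (BitVec b)) :
    (hc h k l).length = l.length := by
  induction l generalizing k with
  | nil => rfl
  | cons a as ih => simp [hc, ih]

lemma cpl_hc {b : ℕ} (h : BitVec b → BitVec b) (hinj : Function.Injective h)
    (k : BitVec b) (l m : List (BitVec b)) :
    cpl (hc h k l) (hc h k m) = cpl l m := by
  induction l generalizing k m with
  | nil => cases m <;> rfl
  | cons a as ih =>
    cases m with
    | nil => rfl
    | cons c cs =>
      by_cases hac : a = c
      · subst hac
        simp [hc, cpl, ih]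
      · have : h (k ^^^ a) ≠ h (k ^^^ c) := by
          intro hh
          have := hinj hh
          have := congrArg (fun z => k ^^^ z) this
          simp [← BitVec.xor_assoc, BitVec.xor_self, BitVec.zero_xor] at this
          exact hac this
        simp [hc, cpl, hac, this]

lemma cpl_self {α : Type*} [DecidableEq α] (l : List α) : cpl l l = l.length := by
  induction l with
  | nil => rfl
  | cons a as ih => simp [cpl, ih]

lemma hc_inj {b : ℕ} (h : BitVec b → BitVec b) (hinj : Function.Injective h)
    (k : BitVec b) {l m : List (BitVec b)} (he : hc h k l = hc h k m) : l = m := by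
  have hlen : l.length = m.length := by
    have := congrArg List.length he
    simpa [hc_length] using this
  have hcpl : cpl l m = l.length := by
    rw [← cpl_hc h hinj k, he, cpl_self, hc_length, hlen]
  -- from cpl l m = l.length and lengths equal, l = m
  clear he
  induction l generalizing m with
  | nil => cases m <;> simp_all
  | cons a as ih =>
    cases m with
    | nil => simp at hlen
    | cons c cs =>
      by_cases hac : a = c
      · subst hac
        simp [cpl] at hcpl
        simp only [List.length_cons] at hlen
        exact congrArg _ (ih (by omega) (by omega))
      · simp [cpl, hac] at hcpl

lemma cpl_prefix {α : Type*} [DecidableEq α] {x x' : List α} (hpre : x <+: x') (c : List α) :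
    cpl x c = min x.length (cpl x' c) := by
  induction x generalizing x' c with
  | nil => simp [cpl]
  | cons a as ih =>
    obtain ⟨t, rfl⟩ := hpre
    cases c with
    | nil => simp [cpl]
    | cons b bs =>
      by_cases hab : a = b
      · subst hab
        simp [cpl, ih ⟨t, rfl⟩ bs]
      · simp [cpl, hab]

lemma key_cmp (K : ℚ) (n1 n2 : ℕ) (e1 e2 : ℚ)
    (hp1 : 0 < e1) (hb1 : e1 ≤ 1) (hp2 : 0 < e2) (hb2 : e2 ≤ 1) :
    (K - n1 - e1 < K - n2 - e2 ↔ (n2 < n1 ∨ (n1 = n2 ∧ e2 < e1))) ∧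
    (K - n1 - e1 = K - n2 - e2 ↔ (n1 = n2 ∧ e1 = e2)) := by
  have hA : ∀ m1 m2 : ℕ, ∀ f1 f2 : ℚ, 0 < f1 → f2 ≤ 1 → m2 < m1 →
      K - m1 - f1 < K - m2 - f2 := by
    intro m1 m2 f1 f2 hf1 hf2 hm
    have : (m2 : ℚ) + 1 ≤ m1 := by exact_mod_cast hm
    linarith
  constructor
  · constructor
    · intro hlt
      rcases lt_trichotomy n1 n2 with hn | hn | hn
      · exact absurd hlt (not_lt.2 (le_of_lt (hA n2 n1 e2 e1 hp2 hb1 hn)))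
      · subst hn; right; exact ⟨rfl, by linarith⟩
      · exact Or.inl hn
    · rintro (hn | ⟨rfl, he⟩)
      · exact hA n1 n2 e1 e2 hp1 hb2 hn
      · linarith
  · constructor
    · intro heq
      rcases lt_trichotomy n1 n2 with hn | hn | hn
      · exact absurd heq (ne_of_gt (hA n2 n1 e2 e1 hp2 hb1 hn))
      · subst hn; exact ⟨rfl, by linarith⟩
      · exact absurd heq (ne_of_lt (hA n1 n2 e1 e2 hp1 hb2 hn))
    · rintro ⟨rfl, rfl⟩; rfl

/-- For an injective `h`, a coordinate `x` with `|x| < L`, a padded coordinate `x'` of `x`,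
and the return address `y = hc k̃ x'`: for all coordinates `c1, c2` distinct from `x` with
`cpl x' cᵢ ≤ |x|`, comparisons of `δ_CPL` using the return address agree with comparisons
using the original coordinate: the return address is route preserving w.r.t. `δ_CPL`. -/
theorem return_address_route_preserving_CPL {b L : ℕ}
    (h : BitVec b → BitVec b) (hinj : Function.Injective h) (k : BitVec b)
    (x x' : List (BitVec b)) (hlen : x.length < L) (hpre : x <+: x')
    (hplen : x'.length = L)
    (c1 c2 : List (BitVec b)) (h1 : cpl x' c1 ≤ x.length) (h2 : cpl x' c2 ≤ x.length)
    (hne1 : c1 ≠ x) (hne2 : c2 ≠ x) :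
    (deltaCPL L x c1 < deltaCPL L x c2 ↔
      deltaCPL L (hc h k x') (hc h k c1) < deltaCPL L (hc h k x') (hc h k c2)) ∧
    (deltaCPL L x c1 = deltaCPL L x c2 ↔
      deltaCPL L (hc h k x') (hc h k c1) = deltaCPL L (hc h k x') (hc h k c2)) := by
  -- cpl values agree
  have hx'ne1 : x' ≠ c1 := by
    rintro rfl; rw [cpl_self] at h1; omega
  have hx'ne2 : x' ≠ c2 := by
    rintro rfl; rw [cpl_self] at h2; omega
  have hcne1 : hc h k x' ≠ hc h k c1 := fun he => hx'ne1 (hc_inj h hinj k he)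
  have hcne2 : hc h k x' ≠ hc h k c2 := fun he => hx'ne2 (hc_inj h hinj k he)
  have hc1 : cpl x c1 = cpl x' c1 := by rw [cpl_prefix hpre]; omega
  have hc2 : cpl x c2 = cpl x' c2 := by rw [cpl_prefix hpre]; omega
  set n1 := cpl x' c1 with hn1
  set n2 := cpl x' c2 with hn2
  -- rewrite the four deltaCPL terms
  have d1 : deltaCPL L x c1 = (L : ℚ) - n1 - 1 / ((x.length : ℚ) + c1.length + 1) := by
    rw [deltaCPL, if_neg (Ne.symm hne1), hc1]
  have d2 : deltaCPL L x c2 = (L : ℚ) - n2 - 1 / ((x.length : ℚ) + c2.length + 1) := by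
    rw [deltaCPL, if_neg (Ne.symm hne2), hc2]
  have d1' : deltaCPL L (hc h k x') (hc h k c1)
      = (L : ℚ) - n1 - 1 / ((L : ℚ) + c1.length + 1) := by
    rw [deltaCPL, if_neg hcne1, cpl_hc h hinj, hc_length, hc_length, hplen, hn1]
  have d2' : deltaCPL L (hc h k x') (hc h k c2)
      = (L : ℚ) - n2 - 1 / ((L : ℚ) + c2.length + 1) := by
    rw [deltaCPL, if_neg hcne2, cpl_hc h hinj, hc_length, hc_length, hplen, hn2]
  -- positivity facts
  have s1pos : (0:ℚ) < (x.length : ℚ) + c1.length + 1 := by positivity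
  have s2pos : (0:ℚ) < (x.length : ℚ) + c2.length + 1 := by positivity
  have t1pos : (0:ℚ) < (L : ℚ) + c1.length + 1 := by positivity
  have t2pos : (0:ℚ) < (L : ℚ) + c2.length + 1 := by positivity
  have e1p : (0:ℚ) < 1 / ((x.length : ℚ) + c1.length + 1) := by positivity
  have e2p : (0:ℚ) < 1 / ((x.length : ℚ) + c2.length + 1) := by positivity
  have f1p : (0:ℚ) < 1 / ((L : ℚ) + c1.length + 1) := by positivity
  have f2p : (0:ℚ) < 1 / ((L : ℚ) + c2.length + 1) := by positivity
  have e1b : 1 / ((x.length : ℚ) + c1.length + 1) ≤ 1 := by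
    rw [div_le_one s1pos]; have : (0:ℚ) ≤ (x.length : ℚ) := by positivity
    have : (0:ℚ) ≤ (c1.length : ℚ) := by positivity
    linarith [Nat.cast_nonneg (α := ℚ) x.length]
  have e2b : 1 / ((x.length : ℚ) + c2.length + 1) ≤ 1 := by
    rw [div_le_one s2pos]
    linarith [Nat.cast_nonneg (α := ℚ) x.length, Nat.cast_nonneg (α := ℚ) c2.length]
  have f1b : 1 / ((L : ℚ) + c1.length + 1) ≤ 1 := by
    rw [div_le_one t1pos]
    linarith [Nat.cast_nonneg (α := ℚ) L, Nat.cast_nonneg (α := ℚ) c1.length]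
  have f2b : 1 / ((L : ℚ) + c2.length + 1) ≤ 1 := by
    rw [div_le_one t2pos]
    linarith [Nat.cast_nonneg (α := ℚ) L, Nat.cast_nonneg (α := ℚ) c2.length]
  obtain ⟨K1lt, K1eq⟩ := key_cmp (L : ℚ) n1 n2 _ _ e1p e1b e2p e2b
  obtain ⟨K2lt, K2eq⟩ := key_cmp (L : ℚ) n1 n2 _ _ f1p f1b f2p f2b
  -- translate the e/f comparisons to length comparisons
  have elt : (1 / ((x.length : ℚ) + c2.length + 1) < 1 / ((x.length : ℚ) + c1.length + 1))
      ↔ c1.length < c2.length := by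
    rw [div_lt_div_iff₀ s2pos s1pos, one_mul, one_mul]
    constructor
    · intro hh; exact_mod_cast (by linarith : (c1.length : ℚ) < c2.length)
    · intro hh; have : (c1.length : ℚ) < c2.length := by exact_mod_cast hh
      linarith
  have flt : (1 / ((L : ℚ) + c2.length + 1) < 1 / ((L : ℚ) + c1.length + 1))
      ↔ c1.length < c2.length := by
    rw [div_lt_div_iff₀ t2pos t1pos, one_mul, one_mul]
    constructor
    · intro hh; exact_mod_cast (by linarith : (c1.length : ℚ) < c2.length)
    · intro hh; have : (c1.length : ℚ) < c2.length := by exact_mod_cast hh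
      linarith
  have eeq : (1 / ((x.length : ℚ) + c1.length + 1) = 1 / ((x.length : ℚ) + c2.length + 1))
      ↔ c1.length = c2.length := by
    rw [div_eq_div_iff s1pos.ne' s2pos.ne', one_mul, one_mul]
    constructor
    · intro hh; exact_mod_cast (by linarith : (c1.length : ℚ) = c2.length)
    · intro hh; have : (c1.length : ℚ) = c2.length := by exact_mod_cast hh
      linarith
  have feq : (1 / ((L : ℚ) + c1.length + 1) = 1 / ((L : ℚ) + c2.length + 1))
      ↔ c1.length = c2.length := by
    rw [div_eq_div_iff t1pos.ne' t2pos.ne', one_mul, one_mul]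
    constructor
    · intro hh; exact_mod_cast (by linarith : (c1.length : ℚ) = c2.length)
    · intro hh; have : (c1.length : ℚ) = c2.length := by exact_mod_cast hh
      linarith
  rw [d1, d2, d1', d2']
  constructor
  · rw [K1lt, K2lt, elt, flt]
  · rw [K1eq, K2eq, eeq, feq]
end

section
/- Let x ≠ e be coordinates with |x| < L and |e| < L. (i) If cpl(x, e) < |x|, then δ_CPL(dropLast(x), e) < δ_CPL(x, e), where dropLast(x) is x with its last element removed. (ii) If cpl(x, e) = |x| (x is a proper prefix of e), then the child coordinate c = take(|x| + 1, e) satisfies δ_CPL(c, e) < δ_CPL(x, e). Hence the prefix-tree embedding is also greedy with respect to the common-prefix-length based distance δ_CPL. -/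
lemma cpl_le_left {α : Type*} [DecidableEq α] : ∀ x y : List α, cpl x y ≤ x.length
  | [], _ => by simp [cpl]
  | a :: as, [] => by simp [cpl]
  | a :: as, b :: bs => by
    by_cases h : a = b
    · simp only [cpl, if_pos h, List.length_cons]
      exact Nat.succ_le_succ (cpl_le_left as bs)
    · simp [cpl, if_neg h]

lemma cpl_le_right {α : Type*} [DecidableEq α] : ∀ x y : List α, cpl x y ≤ y.length
  | [], _ => by simp [cpl]
  | a :: as, [] => by simp [cpl]
  | a :: as, b :: bs => by
    by_cases h : a = b
    · simp only [cpl, if_pos h, List.length_cons]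
      exact Nat.succ_le_succ (cpl_le_right as bs)
    · simp [cpl, if_neg h]

lemma eq_of_cpl {α : Type*} [DecidableEq α] : ∀ x y : List α,
    cpl x y = x.length → x.length = y.length → x = y
  | [], [], _, _ => rfl
  | [], b :: bs, _, h2 => by simp at h2
  | a :: as, [], _, h2 => by simp at h2
  | a :: as, b :: bs, h1, h2 => by
    by_cases h : a = b
    · subst h
      simp [cpl] at h1 h2
      rw [eq_of_cpl as bs h1 h2]
    · simp [cpl, if_neg h] at h1

lemma cpl_take {α : Type*} [DecidableEq α] : ∀ (y : List α) (n : ℕ),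
    cpl (y.take n) y = min n y.length
  | [], n => by simp [cpl]
  | b :: bs, 0 => by simp [cpl]
  | b :: bs, n + 1 => by
    simp [cpl, cpl_take bs n]

lemma cpl_dropLast {α : Type*} [DecidableEq α] : ∀ x e : List α,
    cpl x e < x.length → cpl x.dropLast e = cpl x e
  | [], e, h => by simp at h
  | a :: as, [], h => by simp [cpl]
  | a :: as, b :: bs, h => by
    by_cases hab : a = b
    · simp only [cpl, if_pos hab, List.length_cons] at h
      have has : cpl as bs < as.length := by omega
      have hasne : as ≠ [] := by
        intro hnil; rw [hnil] at has; simp [cpl] at has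
      rw [List.dropLast_cons_of_ne_nil hasne]
      simp only [cpl, if_pos hab, cpl_dropLast as bs has]
    · simp only [cpl, if_neg hab]
      cases as with
      | nil => simp [cpl]
      | cons c cs =>
        rw [List.dropLast_cons_of_ne_nil (by simp)]
        simp [cpl, if_neg hab]

/-- The prefix-tree embedding is greedy w.r.t. `δ_CPL`: for `x ≠ e` with `|x| < L` and
`|e| < L`, (i) if `cpl x e < |x|` the parent `dropLast x` is strictly closer to `e`,
and (ii) if `cpl x e = |x|` the child `take (|x|+1) e` is strictly closer to `e`. -/
theorem prefix_tree_greedy_CPL {α : Type*} [DecidableEq α] (L : ℕ) (x e : List α)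
    (hne : x ≠ e) (hx : x.length < L) (he : e.length < L) :
    (cpl x e < x.length → deltaCPL L x.dropLast e < deltaCPL L x e) ∧
    (cpl x e = x.length → deltaCPL L (e.take (x.length + 1)) e < deltaCPL L x e) := by
  constructor
  · intro h
    have hx1 : 1 ≤ x.length := by omega
    have hcL : (cpl x e : ℚ) + 1 ≤ L := by
      have : cpl x e + 1 ≤ L := by omega
      exact_mod_cast this
    by_cases hde : x.dropLast = e
    · rw [deltaCPL, if_pos hde, deltaCPL, if_neg hne]
      have hd : (2 : ℚ) ≤ (x.length : ℚ) + e.length + 1 := by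
        have : 2 ≤ x.length + e.length + 1 := by omega
        exact_mod_cast this
      have h1 : (1 : ℚ) / ((x.length : ℚ) + e.length + 1) ≤ 1 / 2 :=
        one_div_le_one_div_of_le (by norm_num) hd
      linarith
    · rw [deltaCPL, if_neg hde, deltaCPL, if_neg hne, cpl_dropLast x e h]
      have hlen : x.dropLast.length = x.length - 1 := List.length_dropLast
      have hcast : (x.dropLast.length : ℚ) = (x.length : ℚ) - 1 := by
        rw [hlen]
        push_cast [Nat.cast_sub hx1]
        ring
      rw [hcast]
      have hd' : (0 : ℚ) < (x.length : ℚ) - 1 + e.length + 1 := by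
        have : (1 : ℚ) ≤ x.length := by exact_mod_cast hx1
        have : (0 : ℚ) ≤ (e.length : ℚ) := by positivity
        linarith
      have hlt : ((x.length : ℚ) - 1 + e.length + 1) < (x.length : ℚ) + e.length + 1 := by
        linarith
      have := one_div_lt_one_div_of_lt hd' hlt
      linarith
  · intro h
    have hle : x.length ≤ e.length := h ▸ cpl_le_right x e
    have hlt : x.length < e.length := by
      rcases lt_or_eq_of_le hle with h' | h'
      · exact h'
      · exact absurd (eq_of_cpl x e h h') hne
    have hc : cpl (e.take (x.length + 1)) e = x.length + 1 := by
      rw [cpl_take]; omega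
    have hclen : (e.take (x.length + 1)).length = x.length + 1 := by
      rw [List.length_take]; omega
    have hcL : (cpl x e : ℚ) + 1 ≤ L := by
      have : cpl x e + 1 ≤ L := by omega
      exact_mod_cast this
    by_cases hce : e.take (x.length + 1) = e
    · rw [deltaCPL, if_pos hce, deltaCPL, if_neg hne]
      have hd : (2 : ℚ) ≤ (x.length : ℚ) + e.length + 1 := by
        have : 2 ≤ x.length + e.length + 1 := by omega
        exact_mod_cast this
      have h1 : (1 : ℚ) / ((x.length : ℚ) + e.length + 1) ≤ 1 / 2 :=
        one_div_le_one_div_of_le (by norm_num) hd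
      linarith
    · rw [deltaCPL, if_neg hce, deltaCPL, if_neg hne, hc, hclen, h]
      push_cast
      have hd1 : (0 : ℚ) < (x.length : ℚ) + e.length + 1 := by positivity
      have hd2 : (0 : ℚ) < (x.length : ℚ) + 1 + e.length + 1 := by positivity
      have h1 : (1 : ℚ) / ((x.length : ℚ) + e.length + 1) ≤ 1 := by
        rw [div_le_one hd1]
        have : (0:ℚ) ≤ (x.length:ℚ) := by positivity
        have : (0:ℚ) ≤ (e.length:ℚ) := by positivity
        linarith
      have h2 : (0 : ℚ) < 1 / ((x.length : ℚ) + 1 + e.length + 1) := by positivity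
      linarith
end
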